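/- Let A be positive semidefinite and Z positive definite with extremal eigenvalues a ≥ b > 0. Then ‖AZ‖₁ ≤ ((a+b)/(2√(ab))) · Tr(AZ), where ‖·‖₁ is the trace norm. -/

import Mathlib

open scoped ComplexOrder

/-- The trace norm of a matrix: the sum of its singular values. -/
noncomputable def traceNorm {n : ℕ} (X : Matrix (Fin n) (Fin n) ℂ) : ℝ :=
  ∑ i, Real.sqrt ((Matrix.posSemidef_conjTranspose_mul_self X).1.eigenvalues i)

section Helpers
open Matrix
open scoped MatrixOrder

lemma trace_re_nonneg {n : ℕ} {M : Matrix (Fin n) (Fin n) ℂ} (hM : M.PosSemidef) :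
    0 ≤ M.trace.re := by
  have h : ∀ i, 0 ≤ M i i := fun i => hM.diag_nonneg
  have : (0:ℂ) ≤ M.trace := Finset.sum_nonneg fun i _ => h i
  exact (Complex.le_def.mp this).1

lemma trace_mul_re_nonneg {n : ℕ} {B C : Matrix (Fin n) (Fin n) ℂ}
    (hB : B.PosSemidef) (hC : C.PosSemidef) : 0 ≤ (B * C).trace.re := by
  have hS := (CFC.sqrt_nonneg B).posSemidef
  have h1 : B * C = CFC.sqrt B * (CFC.sqrt B * C) := by
    rw [← Matrix.mul_assoc, CFC.sqrt_mul_sqrt_self B hB.nonneg]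
  have h2 : (B * C).trace = (CFC.sqrt B * C * CFC.sqrt B).trace := by
    rw [h1, Matrix.trace_mul_comm]
  rw [h2]
  exact trace_re_nonneg (by simpa [hS.1.eq] using hC.conjTranspose_mul_mul_same (CFC.sqrt B))

lemma trace_conjTranspose_mul_self_re {n : ℕ} (C : Matrix (Fin n) (Fin n) ℂ) :
    (Cᴴ * C).trace.re = ∑ p : Fin n × Fin n, ‖C p.2 p.1‖ ^ 2 := by
  simp only [Matrix.trace, Matrix.diag, Matrix.mul_apply, Matrix.conjTranspose_apply,
    Fintype.sum_prod_type, Complex.re_sum]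
  refine Finset.sum_congr rfl fun j _ => Finset.sum_congr rfl fun k _ => ?_
  rw [Complex.sq_norm, Complex.star_def, ← Complex.normSq_eq_conj_mul_self, Complex.ofReal_re]

lemma traceNorm_mul_le {n : ℕ} (X Y : Matrix (Fin n) (Fin n) ℂ) :
    traceNorm (X * Y) ≤ Real.sqrt ((Xᴴ * X).trace.re) * Real.sqrt ((Yᴴ * Y).trace.re) := by
  set M := X * Y with hMdef
  have hM := Matrix.posSemidef_conjTranspose_mul_self M
  set h : (Mᴴ * M).IsHermitian := hM.1 with hh
  set μ : Fin n → ℝ := h.eigenvalues with hμ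
  have hμ0 : ∀ i, 0 ≤ μ i := hM.eigenvalues_nonneg
  set V : Matrix (Fin n) (Fin n) ℂ := (h.eigenvectorUnitary : Matrix (Fin n) (Fin n) ℂ) with hV
  have hVV : star V * V = 1 := Unitary.coe_star_mul_self _
  have hVV' : V * star V = 1 := Unitary.coe_mul_star_self _
  have spec : Mᴴ * M = V * Matrix.diagonal (RCLike.ofReal ∘ μ) * star V := h.spectral_theorem
  have key : star V * (Mᴴ * M) * V = Matrix.diagonal (RCLike.ofReal ∘ μ) := by
    rw [spec]
    calc star V * (V * Matrix.diagonal (RCLike.ofReal ∘ μ) * star V) * V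
        = (star V * V) * Matrix.diagonal (RCLike.ofReal ∘ μ) * (star V * V) := by
          noncomm_ring
      _ = Matrix.diagonal (RCLike.ofReal ∘ μ) := by rw [hVV, one_mul, mul_one]
  have hcast : (RCLike.ofReal ∘ μ : Fin n → ℂ) = fun i => ((μ i : ℝ) : ℂ) :=
    funext fun i => congrFun Complex.coe_algebraMap (μ i)
  rw [hcast] at key
  set dp : Fin n → ℂ := fun i => if μ i = 0 then 0 else ((Real.sqrt (μ i) : ℝ) : ℂ)⁻¹ with hdp
  set U : Matrix (Fin n) (Fin n) ℂ := M * V * Matrix.diagonal dp with hU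
  have hUH : Uᴴ = Matrix.diagonal (fun i => star (dp i)) * (star V * Mᴴ) := by
    rw [hU, Matrix.conjTranspose_mul, Matrix.conjTranspose_mul, Matrix.diagonal_conjTranspose]
    rfl
  have hkey2 : Uᴴ * (M * V) = Matrix.diagonal (fun i => ((Real.sqrt (μ i) : ℝ) : ℂ)) := by
    rw [hUH]
    have e : Matrix.diagonal (fun i => star (dp i)) * (star V * Mᴴ) * (M * V)
        = Matrix.diagonal (fun i => star (dp i)) * (star V * (Mᴴ * M) * V) := by
      noncomm_ring
    rw [e, key, Matrix.diagonal_mul_diagonal]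
    refine congrArg Matrix.diagonal (funext fun i => ?_)
    by_cases hi : μ i = 0
    · simp [hdp, hi, Function.comp]
    · have hs : Real.sqrt (μ i) ≠ 0 :=
        Real.sqrt_ne_zero'.mpr (lt_of_le_of_ne (hμ0 i) (Ne.symm hi))
      simp only [hdp, hi, if_false]
      rw [RCLike.star_def, ← Complex.ofReal_inv, Complex.conj_ofReal,
        ← Complex.ofReal_mul, inv_mul_eq_div, Real.div_sqrt]
  have hUU : Uᴴ * U = Matrix.diagonal (fun i => if μ i = 0 then (0:ℂ) else 1) := by
    have e : Uᴴ * U = (Uᴴ * (M * V)) * Matrix.diagonal dp := by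
      rw [hU]; noncomm_ring
    rw [e, hkey2, Matrix.diagonal_mul_diagonal]
    refine congrArg Matrix.diagonal (funext fun i => ?_)
    by_cases hi : μ i = 0
    · simp [hdp, hi]
    · have hs : Real.sqrt (μ i) ≠ 0 :=
        Real.sqrt_ne_zero'.mpr (lt_of_le_of_ne (hμ0 i) (Ne.symm hi))
      have hs' : ((Real.sqrt (μ i) : ℝ) : ℂ) ≠ 0 := by exact_mod_cast hs
      simp [hdp, hi, mul_inv_cancel₀ hs']
  have hUe : U * Matrix.diagonal (fun i => if μ i = 0 then (0:ℂ) else 1) = U := by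
    rw [hU, Matrix.mul_assoc, Matrix.diagonal_mul_diagonal]
    refine congrArg (fun d => M * V * Matrix.diagonal d) (funext fun i => ?_)
    by_cases hi : μ i = 0 <;> simp [hdp, hi]
  set Pr : Matrix (Fin n) (Fin n) ℂ := U * Uᴴ with hPrdef
  have hPr : Pr * Pr = Pr := by
    calc U * Uᴴ * (U * Uᴴ) = (U * (Uᴴ * U)) * Uᴴ := by noncomm_ring
      _ = U * Uᴴ := by rw [hUU, hUe]
  have hPrH : Prᴴ = Pr := by
    rw [hPrdef, Matrix.conjTranspose_mul, Matrix.conjTranspose_conjTranspose]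
  have h1Pr : (1 - Pr).PosSemidef := by
    have h2 : (1 - Pr)ᴴ * (1 - Pr) = 1 - Pr := by
      rw [Matrix.conjTranspose_sub, Matrix.conjTranspose_one, hPrH]
      have e : (1 - Pr) * (1 - Pr) = 1 - Pr - (Pr - Pr * Pr) := by noncomm_ring
      rw [e, hPr, sub_self, sub_zero]
    exact h2 ▸ Matrix.posSemidef_conjTranspose_mul_self (1 - Pr)
  have tN : traceNorm M = ∑ i, Real.sqrt (μ i) := rfl
  have hsum : ((Uᴴ * (M * V)).trace).re = ∑ i, Real.sqrt (μ i) := by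
    rw [hkey2, Matrix.trace_diagonal, Complex.re_sum]
    simp
  set C : Matrix (Fin n) (Fin n) ℂ := Xᴴ * U with hC
  set B : Matrix (Fin n) (Fin n) ℂ := Y * V with hB
  have hCB : Uᴴ * (M * V) = Cᴴ * B := by
    simp only [hC, hB, hMdef, Matrix.conjTranspose_mul, Matrix.conjTranspose_conjTranspose]
    noncomm_ring
  have htr : (Cᴴ * B).trace.re = ∑ p : Fin n × Fin n, (star (C p.2 p.1) * B p.2 p.1).re := by
    simp only [Matrix.trace, Matrix.diag, Matrix.mul_apply, Matrix.conjTranspose_apply,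
      Fintype.sum_prod_type, Complex.re_sum]
  have step1 : (Cᴴ * B).trace.re ≤
      ∑ p : Fin n × Fin n, ‖C p.2 p.1‖ * ‖B p.2 p.1‖ := by
    rw [htr]
    refine Finset.sum_le_sum fun p _ => ?_
    calc (star (C p.2 p.1) * B p.2 p.1).re ≤ ‖star (C p.2 p.1) * B p.2 p.1‖ :=
          Complex.re_le_norm _
      _ = ‖C p.2 p.1‖ * ‖B p.2 p.1‖ := by
          rw [norm_mul, RCLike.star_def, Complex.norm_conj]
  have step2 : ∑ p : Fin n × Fin n, ‖C p.2 p.1‖ * ‖B p.2 p.1‖ ≤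
      Real.sqrt (∑ p : Fin n × Fin n, ‖C p.2 p.1‖ ^ 2) *
      Real.sqrt (∑ p : Fin n × Fin n, ‖B p.2 p.1‖ ^ 2) := by
    have cs := Finset.sum_mul_sq_le_sq_mul_sq Finset.univ
      (fun p : Fin n × Fin n => ‖C p.2 p.1‖)
      (fun p : Fin n × Fin n => ‖B p.2 p.1‖)
    have h0 : 0 ≤ ∑ p : Fin n × Fin n, ‖C p.2 p.1‖ * ‖B p.2 p.1‖ :=
      Finset.sum_nonneg fun p _ => mul_nonneg (norm_nonneg _) (norm_nonneg _)
    have := Real.sqrt_le_sqrt cs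
    rw [Real.sqrt_sq h0, Real.sqrt_mul (Finset.sum_nonneg fun p _ => sq_nonneg _)] at this
    exact this
  have hC_le : (Cᴴ * C).trace.re ≤ (Xᴴ * X).trace.re := by
    have e1 : (Cᴴ * C).trace = ((X * Xᴴ) * Pr).trace := by
      simp only [hC, Matrix.conjTranspose_mul, Matrix.conjTranspose_conjTranspose]
      calc ((Uᴴ * X) * (Xᴴ * U)).trace = ((Xᴴ * U) * (Uᴴ * X)).trace :=
            Matrix.trace_mul_comm _ _
        _ = ((Xᴴ * (U * Uᴴ)) * X).trace := by noncomm_ring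
        _ = (X * (Xᴴ * (U * Uᴴ))).trace := Matrix.trace_mul_comm _ _
        _ = ((X * Xᴴ) * Pr).trace := by rw [hPrdef]; noncomm_ring
    have e2 : (Xᴴ * X).trace = ((X * Xᴴ) * Pr).trace + ((X * Xᴴ) * (1 - Pr)).trace := by
      rw [← Matrix.trace_add, ← Matrix.mul_add, add_sub_cancel, Matrix.mul_one,
        Matrix.trace_mul_comm]
    have e3 : 0 ≤ ((X * Xᴴ) * (1 - Pr)).trace.re :=
      trace_mul_re_nonneg (Matrix.posSemidef_self_mul_conjTranspose X) h1Pr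
    have e4 : (Xᴴ * X).trace.re = ((X * Xᴴ) * Pr).trace.re + ((X * Xᴴ) * (1 - Pr)).trace.re := by
      rw [e2, Complex.add_re]
    rw [e1]
    linarith
  have hB_eq : (Bᴴ * B).trace = (Yᴴ * Y).trace := by
    simp only [hB, Matrix.conjTranspose_mul]
    calc ((Vᴴ * Yᴴ) * (Y * V)).trace = ((Y * V) * (Vᴴ * Yᴴ)).trace := Matrix.trace_mul_comm _ _
      _ = (Y * (V * Vᴴ) * Yᴴ).trace := by noncomm_ring
      _ = (Y * Yᴴ).trace := by
          rw [← Matrix.star_eq_conjTranspose V, hVV', Matrix.mul_one]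
      _ = (Yᴴ * Y).trace := Matrix.trace_mul_comm _ _
  have hCsq : ∑ p : Fin n × Fin n, ‖C p.2 p.1‖ ^ 2 = (Cᴴ * C).trace.re :=
    (trace_conjTranspose_mul_self_re C).symm
  have hBsq : ∑ p : Fin n × Fin n, ‖B p.2 p.1‖ ^ 2 = (Bᴴ * B).trace.re :=
    (trace_conjTranspose_mul_self_re B).symm
  calc traceNorm M = ((Uᴴ * (M * V)).trace).re := by rw [tN, hsum]
    _ = (Cᴴ * B).trace.re := by rw [hCB]
    _ ≤ ∑ p : Fin n × Fin n, ‖C p.2 p.1‖ * ‖B p.2 p.1‖ := step1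
    _ ≤ Real.sqrt (∑ p : Fin n × Fin n, ‖C p.2 p.1‖ ^ 2) *
        Real.sqrt (∑ p : Fin n × Fin n, ‖B p.2 p.1‖ ^ 2) := step2
    _ = Real.sqrt ((Cᴴ * C).trace.re) * Real.sqrt ((Bᴴ * B).trace.re) := by
        rw [hCsq, hBsq]
    _ ≤ Real.sqrt ((Xᴴ * X).trace.re) * Real.sqrt ((Yᴴ * Y).trace.re) := by
        rw [hB_eq]
        exact mul_le_mul_of_nonneg_right (Real.sqrt_le_sqrt hC_le) (Real.sqrt_nonneg _)

set_option maxHeartbeats 1000000 in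
theorem stmt_6 (n : ℕ) (A Z : Matrix (Fin n) (Fin n) ℂ)
    (hA : A.PosSemidef) (hZ : Z.PosDef) (a b : ℝ)
    (ha : ∀ i, hZ.1.eigenvalues i ≤ a) (ha' : ∃ i, hZ.1.eigenvalues i = a)
    (hb : ∀ i, b ≤ hZ.1.eigenvalues i) (hb' : ∃ i, hZ.1.eigenvalues i = b) :
    traceNorm (A * Z) ≤ (a + b) / (2 * Real.sqrt (a * b)) * ((A * Z).trace).re := by
  obtain ⟨i₀, hi₀⟩ := hb'
  have hbpos : 0 < b := hi₀ ▸ hZ.eigenvalues_pos i₀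
  have hba : b ≤ a := hi₀ ▸ ha i₀
  have hapos : 0 < a := lt_of_lt_of_le hbpos hba
  have habpos : 0 < a * b := mul_pos hapos hbpos
  have hsab : 0 < Real.sqrt (a * b) := Real.sqrt_pos.mpr habpos
  have hZpsd := hZ.posSemidef
  set R := CFC.sqrt Z with hR
  have hRpsd : R.PosSemidef := (CFC.sqrt_nonneg Z).posSemidef
  have hRh : Rᴴ = R := hRpsd.1
  have hRR : R * R = Z := CFC.sqrt_mul_sqrt_self Z hZpsd.nonneg
  have hdetZ : IsUnit Z.det := (Matrix.isUnit_iff_isUnit_det Z).mp hZ.isUnit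
  have hdetR : IsUnit R.det := by
    have e : R.det * R.det = Z.det := by rw [← Matrix.det_mul, hRR]
    exact isUnit_of_mul_isUnit_left (e ▸ hdetZ)
  have hRinv : R⁻¹ * R = 1 := Matrix.nonsing_inv_mul R hdetR
  have hRinvH : (R⁻¹)ᴴ = R⁻¹ := by rw [Matrix.conjTranspose_nonsing_inv, hRh]
  set P := R * A * R with hP
  have hPpsd : P.PosSemidef := by
    have := hA.conjTranspose_mul_mul_same R; rwa [hRh] at this
  set Q := CFC.sqrt P with hQ
  have hQpsd : Q.PosSemidef := (CFC.sqrt_nonneg P).posSemidef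
  have hQh : Qᴴ = Q := hQpsd.1
  have hQQ : Q * Q = P := CFC.sqrt_mul_sqrt_self P hPpsd.nonneg
  have hfact : A * Z = (R⁻¹ * Q) * (Q * R) := by
    have e1 : R⁻¹ * (R * A * R) * R = (R⁻¹ * R) * (A * (R * R)) := by noncomm_ring
    have e2 : A * Z = R⁻¹ * P * R := by
      rw [hP, e1, hRinv, one_mul, hRR]
    rw [e2, ← hQQ]
    noncomm_ring
  have hCS := traceNorm_mul_le (R⁻¹ * Q) (Q * R)
  rw [← hfact] at hCS
  have hZIinv : Z⁻¹ = R⁻¹ * R⁻¹ := by rw [← hRR, Matrix.mul_inv_rev]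
  have hXX : ((R⁻¹ * Q)ᴴ * (R⁻¹ * Q)) = Q * Z⁻¹ * Q := by
    rw [Matrix.conjTranspose_mul, hQh, hRinvH, hZIinv]
    noncomm_ring
  have hYY : ((Q * R)ᴴ * (Q * R)).trace = (Q * Z * Q).trace := by
    rw [Matrix.conjTranspose_mul, hQh, hRh]
    calc (R * Q * (Q * R)).trace = ((Q * R) * (R * Q)).trace := Matrix.trace_mul_comm _ _
      _ = (Q * Z * Q).trace := by
          rw [show (Q * R) * (R * Q) = Q * (R * R) * Q by noncomm_ring, hRR]
  set tI := (Q * Z⁻¹ * Q).trace.re with htI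
  set tZ := (Q * Z * Q).trace.re with htZ
  set t := P.trace.re with ht
  have htI0 : 0 ≤ tI := by
    refine trace_re_nonneg ?_
    have := hZ.inv.posSemidef.conjTranspose_mul_mul_same Q
    rwa [hQh] at this
  have htZ0 : 0 ≤ tZ := by
    refine trace_re_nonneg ?_
    have := hZpsd.conjTranspose_mul_mul_same Q
    rwa [hQh] at this
  have ht0 : 0 ≤ t := trace_re_nonneg hPpsd
  have htrace : ((A * Z).trace).re = t := by
    have e : (A * Z).trace = P.trace := by
      rw [hP, Matrix.trace_mul_cycle, Matrix.trace_mul_comm, hRR]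
    rw [e]
  -- operator inequality (a+b)•1 - Z - ab•Z⁻¹ ⪰ 0
  set W : Matrix (Fin n) (Fin n) ℂ := (hZ.1.eigenvectorUnitary : Matrix (Fin n) (Fin n) ℂ)
    with hW
  set ev : Fin n → ℝ := hZ.1.eigenvalues with hev
  have hWW : star W * W = 1 := Unitary.coe_star_mul_self _
  have hWW' : W * star W = 1 := Unitary.coe_mul_star_self _
  have specZ : Z = W * Matrix.diagonal (fun i => ((ev i : ℝ) : ℂ)) * star W := by
    have := hZ.1.spectral_theorem
    rwa [show (RCLike.ofReal ∘ ev : Fin n → ℂ) = fun i => ((ev i : ℝ) : ℂ) from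
      funext fun i => congrFun Complex.coe_algebraMap (ev i)] at this
  have hZinv : Z⁻¹ = W * Matrix.diagonal (fun i => (((ev i)⁻¹ : ℝ) : ℂ)) * star W := by
    refine Matrix.inv_eq_left_inv ?_
    rw [specZ]
    have e1 : W * Matrix.diagonal (fun i => (((ev i)⁻¹ : ℝ) : ℂ)) * star W *
        (W * Matrix.diagonal (fun i => ((ev i : ℝ) : ℂ)) * star W)
        = W * (Matrix.diagonal (fun i => (((ev i)⁻¹ : ℝ) : ℂ)) * (star W * W) *
          Matrix.diagonal (fun i => ((ev i : ℝ) : ℂ))) * star W := by noncomm_ring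
    rw [e1, hWW, Matrix.mul_one, Matrix.diagonal_mul_diagonal]
    have e2 : (fun i => (((ev i)⁻¹ : ℝ) : ℂ) * ((ev i : ℝ) : ℂ)) = fun _ => (1:ℂ) := by
      funext i
      rw [← Complex.ofReal_mul, inv_mul_cancel₀ (ne_of_gt (hZ.eigenvalues_pos i)),
        Complex.ofReal_one]
    rw [e2, Matrix.diagonal_one, Matrix.mul_one, hWW']
  set c : Fin n → ℝ := fun i => a + b - ev i - a * b * (ev i)⁻¹ with hc
  have hcnn : ∀ i, 0 ≤ c i := by
    intro i
    have h1 : 0 < ev i := hZ.eigenvalues_pos i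
    have h2 := ha i
    have h3 := hb i
    have e : c i = (a - ev i) * (ev i - b) / ev i := by
      rw [hc]; field_simp; ring
    rw [e]
    exact div_nonneg (mul_nonneg (sub_nonneg.2 h2) (sub_nonneg.2 h3)) h1.le
  have hdiag : Matrix.diagonal (fun i => ((c i : ℝ) : ℂ)) =
      (((a+b):ℝ):ℂ) • (1 : Matrix (Fin n) (Fin n) ℂ)
        - Matrix.diagonal (fun i => ((ev i : ℝ) : ℂ))
        - (((a*b):ℝ):ℂ) • Matrix.diagonal (fun i => (((ev i)⁻¹ : ℝ) : ℂ)) := by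
    ext i j
    by_cases hij : i = j
    · subst hij
      simp only [Matrix.sub_apply, Matrix.smul_apply, Matrix.diagonal_apply_eq,
        Matrix.one_apply_eq, smul_eq_mul, mul_one, hc]
      push_cast
      ring
    · simp [Matrix.diagonal_apply_ne _ hij, Matrix.one_apply_ne hij]
  have hM0 : (((a+b):ℝ):ℂ) • (1 : Matrix (Fin n) (Fin n) ℂ) - Z - (((a*b):ℝ):ℂ) • Z⁻¹
      = W * Matrix.diagonal (fun i => ((c i : ℝ) : ℂ)) * star W := by
    rw [hdiag, hZinv, specZ]
    rw [Matrix.mul_sub, Matrix.mul_sub, Matrix.sub_mul, Matrix.sub_mul]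
    simp only [mul_smul_comm, smul_mul_assoc, Matrix.mul_one]
    rw [hWW']
  have hM0psd : ((((a+b):ℝ):ℂ) • (1 : Matrix (Fin n) (Fin n) ℂ) - Z
      - (((a*b):ℝ):ℂ) • Z⁻¹).PosSemidef := by
    rw [hM0]
    have hd : (Matrix.diagonal (fun i => ((c i : ℝ) : ℂ))).PosSemidef := by
      refine Matrix.PosSemidef.diagonal fun i => ?_
      exact Complex.zero_le_real.mpr (hcnn i)
    have := hd.mul_mul_conjTranspose_same W
    rwa [← Matrix.star_eq_conjTranspose] at this
  have hQM0 : 0 ≤ (Q * ((((a+b):ℝ):ℂ) • (1 : Matrix (Fin n) (Fin n) ℂ) - Z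
      - (((a*b):ℝ):ℂ) • Z⁻¹) * Q).trace.re := by
    refine trace_re_nonneg ?_
    have := hM0psd.conjTranspose_mul_mul_same Q
    rwa [hQh] at this
  have hexpand : (Q * ((((a+b):ℝ):ℂ) • (1 : Matrix (Fin n) (Fin n) ℂ) - Z
      - (((a*b):ℝ):ℂ) • Z⁻¹) * Q).trace
      = (((a+b):ℝ):ℂ) * P.trace - (Q * Z * Q).trace - (((a*b):ℝ):ℂ) * (Q * Z⁻¹ * Q).trace := by
    have e : Q * ((((a+b):ℝ):ℂ) • (1 : Matrix (Fin n) (Fin n) ℂ) - Z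
        - (((a*b):ℝ):ℂ) • Z⁻¹) * Q
        = (((a+b):ℝ):ℂ) • (Q * Q) - Q * Z * Q - (((a*b):ℝ):ℂ) • (Q * Z⁻¹ * Q) := by
      simp only [Matrix.mul_sub, Matrix.sub_mul, mul_smul_comm, smul_mul_assoc,
        Matrix.mul_one]
    rw [e, Matrix.trace_sub, Matrix.trace_sub, Matrix.trace_smul, Matrix.trace_smul, hQQ,
      smul_eq_mul, smul_eq_mul]
  have hkey : tZ + (a*b) * tI ≤ (a+b) * t := by
    have h1 := hQM0
    rw [hexpand] at h1
    rw [Complex.sub_re, Complex.sub_re, Complex.re_ofReal_mul, Complex.re_ofReal_mul] at h1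
    rw [htI, htZ, ht]
    linarith
  -- final scalar computation
  have hfinal : Real.sqrt tI * Real.sqrt tZ ≤ (a + b) / (2 * Real.sqrt (a * b)) * t := by
    have hs : Real.sqrt tI * Real.sqrt tZ * Real.sqrt (a*b) = Real.sqrt ((a*b*tI) * tZ) := by
      rw [Real.sqrt_mul (mul_nonneg habpos.le htI0) tZ, Real.sqrt_mul habpos.le tI]
      ring
    have hAMGM : Real.sqrt ((a*b*tI) * tZ) ≤ ((a*b*tI) + tZ)/2 := by
      have h1 : (a*b*tI)*tZ ≤ (((a*b*tI)+tZ)/2)^2 := by nlinarith [sq_nonneg (a*b*tI - tZ)]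
      calc Real.sqrt ((a*b*tI)*tZ) ≤ Real.sqrt ((((a*b*tI)+tZ)/2)^2) := Real.sqrt_le_sqrt h1
        _ = ((a*b*tI)+tZ)/2 := Real.sqrt_sq (div_nonneg (add_nonneg (mul_nonneg habpos.le htI0) htZ0) (by norm_num))
    rw [div_mul_eq_mul_div, le_div_iff₀ (mul_pos two_pos hsab)]
    calc Real.sqrt tI * Real.sqrt tZ * (2 * Real.sqrt (a*b))
        = 2 * (Real.sqrt tI * Real.sqrt tZ * Real.sqrt (a*b)) := by ring
      _ = 2 * Real.sqrt ((a*b*tI) * tZ) := by rw [hs]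
      _ ≤ 2 * (((a*b*tI) + tZ)/2) := by linarith
      _ = (a*b*tI) + tZ := by ring
      _ ≤ (a+b) * t := by linarith
  calc traceNorm (A * Z)
      ≤ Real.sqrt (((R⁻¹ * Q)ᴴ * (R⁻¹ * Q)).trace.re) *
        Real.sqrt (((Q * R)ᴴ * (Q * R)).trace.re) := hCS
    _ = Real.sqrt tI * Real.sqrt tZ := by rw [hXX, hYY]
    _ ≤ (a + b) / (2 * Real.sqrt (a * b)) * t := hfinal
    _ = (a + b) / (2 * Real.sqrt (a * b)) * ((A * Z).trace).re := by rw [htrace]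

end Helpers
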